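/- Let K be a field of characteristic zero and c ∈ K with c not an integer. The K-linear map T : K[z, z⁻¹] → K[z, z⁻¹] defined by T(f) = z·f' + c·f + z·f is injective and its cokernel is one-dimensional over K. (This is the algebraic 'Gauss sum' computation: H(G_m, Ψ(c) ⊗ exp) is one-dimensional, concentrated in degree 0.) -/

import Mathlib

/-- Multiplication by `z` on Laurent polynomials `K[z, z⁻¹]`, encoded as finitely
supported functions `ℤ →₀ K` (the coefficient of `zⁿ` sits in degree `n`). -/
noncomputable def zmul (K : Type*) [Field K] : (ℤ →₀ K) →ₗ[K] (ℤ →₀ K) :=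
  Finsupp.lsum K fun n => Finsupp.lsingle (n + 1)

/-- The formal derivative `f ↦ f'` on Laurent polynomials: `zⁿ ↦ n z^(n-1)`. -/
noncomputable def zderiv (K : Type*) [Field K] : (ℤ →₀ K) →ₗ[K] (ℤ →₀ K) :=
  Finsupp.lsum K fun n => (Finsupp.lsingle (n - 1)).comp (LinearMap.lsmul K K (n : K))

/-- The operator `T f = z·f' + c·f + z·f` (the connection of `Ψ(c) ⊗ exp` multiplied
by `z`). -/
noncomputable def gaussOp (K : Type*) [Field K] (c : K) : (ℤ →₀ K) →ₗ[K] (ℤ →₀ K) :=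
  (zmul K).comp (zderiv K) + c • LinearMap.id + zmul K

/-- For `K` of characteristic zero and `c ∈ K` not an integer, the map
`T f = z·f' + c·f + z·f` on `K[z, z⁻¹]` is injective with one-dimensional cokernel:
the algebraic "Gauss sum" computation `H(𝔾_m, Ψ(c) ⊗ exp)` is one-dimensional,
concentrated in degree 0. -/
lemma gaussOp_single {K : Type*} [Field K] (c : K) (n : ℤ) (b : K) :
    gaussOp K c (Finsupp.single n b) =
      Finsupp.single n (((n : K) + c) * b) + Finsupp.single (n + 1) b := by
  simp only [gaussOp, LinearMap.add_apply, LinearMap.comp_apply, LinearMap.smul_apply,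
    LinearMap.id_apply, zmul, zderiv, Finsupp.lsum_single, Finsupp.lsingle_apply,
    LinearMap.lsmul_apply, smul_eq_mul, Finsupp.smul_single, sub_add_cancel]
  rw [add_mul, Finsupp.single_add (a := n)]

lemma gaussOp_apply {K : Type*} [Field K] (c : K) (f : ℤ →₀ K) (k : ℤ) :
    gaussOp K c f k = ((k : K) + c) * f k + f (k - 1) := by
  induction f using Finsupp.induction_linear with
  | zero => simp only [map_zero, Finsupp.coe_zero, Pi.zero_apply, mul_zero, add_zero]
  | add f g hf hg => simp only [map_add, Finsupp.add_apply, hf, hg]; ring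
  | single n b =>
    rw [gaussOp_single]
    simp only [Finsupp.add_apply, Finsupp.single_apply]
    split_ifs with h1 h2 h2 <;> first | (exfalso; omega) | (subst_vars; push_cast; ring1)

theorem stmt10 {K : Type*} [Field K] [CharZero K] (c : K)
    (hc : ¬ ∃ n : ℤ, c = (n : K)) :
    Function.Injective (gaussOp K c) ∧
      Module.finrank K ((ℤ →₀ K) ⧸ LinearMap.range (gaussOp K c)) = 1 := by
  have hne : ∀ k : ℤ, ((k : K) + c) ≠ 0 := by
    intro k h
    apply hc
    refine ⟨-k, ?_⟩
    rw [Int.cast_neg]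
    linear_combination h
  -- injectivity
  have hinj : Function.Injective (gaussOp K c) := by
    rw [← LinearMap.ker_eq_bot]
    rw [LinearMap.ker_eq_bot']
    intro f hf
    by_contra hf0
    have hs : f.support.Nonempty := Finsupp.support_nonempty_iff.mpr hf0
    set m := f.support.min' hs with hm
    have hmem : m ∈ f.support := f.support.min'_mem hs
    have hfm : f m ≠ 0 := Finsupp.mem_support_iff.mp hmem
    have hfm1 : f (m - 1) = 0 := by
      by_contra h
      have : m - 1 ∈ f.support := Finsupp.mem_support_iff.mpr h
      have := f.support.min'_le _ this
      omega
    have := gaussOp_apply c f m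
    rw [hf] at this
    simp only [Finsupp.coe_zero, Pi.zero_apply] at this
    rw [hfm1, add_zero] at this
    exact hfm (by
      rcases mul_eq_zero.mp this.symm with h | h
      · exact absurd h (hne m)
      · exact h)
  refine ⟨hinj, ?_⟩
  set R := LinearMap.range (gaussOp K c) with hR
  -- e0 not in range
  have he0 : (Finsupp.single 0 (1 : K)) ∉ R := by
    rintro ⟨g, hg⟩
    have hg0 : g ≠ 0 := by
      rintro rfl
      simp only [map_zero] at hg
      have := congrArg (fun f : ℤ →₀ K => f 0) hg
      simp only [map_zero, Finsupp.coe_zero, Pi.zero_apply, Finsupp.single_eq_same] at this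
      exact one_ne_zero this.symm
    have hs : g.support.Nonempty := Finsupp.support_nonempty_iff.mpr hg0
    set m := g.support.max' hs
    set m' := g.support.min' hs
    have hmm : m' ≤ m := g.support.min'_le _ (g.support.max'_mem hs)
    -- top
    have h1 : g m ≠ 0 := Finsupp.mem_support_iff.mp (g.support.max'_mem hs)
    have h2 : g (m + 1) = 0 := by
      by_contra h
      have := g.support.le_max' _ (Finsupp.mem_support_iff.mpr h)
      omega
    have htop : (Finsupp.single (0:ℤ) (1:K)) (m + 1) ≠ 0 := by
      rw [← hg, gaussOp_apply, h2, mul_zero, zero_add]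
      simpa using h1
    have hm1 : m + 1 = 0 := by
      by_contra h
      apply htop
      rw [Finsupp.single_apply, if_neg (by omega)]
    -- bottom
    have h3 : g m' ≠ 0 := Finsupp.mem_support_iff.mp (g.support.min'_mem hs)
    have h4 : g (m' - 1) = 0 := by
      by_contra h
      have := g.support.min'_le _ (Finsupp.mem_support_iff.mpr h)
      omega
    have hbot : (Finsupp.single (0:ℤ) (1:K)) m' ≠ 0 := by
      rw [← hg, gaussOp_apply, h4, add_zero]
      exact mul_ne_zero (hne m') h3
    have hm2 : m' = 0 := by
      by_contra h
      apply hbot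
      rw [Finsupp.single_apply, if_neg (by omega)]
    omega
  -- every single n 1 is congruent to a multiple of e0
  have key : ∀ n : ℤ, ∃ a : K,
      Finsupp.single n (1 : K) - a • Finsupp.single 0 (1 : K) ∈ R := by
    intro n
    induction n using Int.induction_on with
    | zero => exact ⟨1, by simp⟩
    | succ n ih =>
      obtain ⟨a, ha⟩ := ih
      refine ⟨-(((n : K)) + c) * a, ?_⟩
      have hT : gaussOp K c (Finsupp.single (n : ℤ) 1) ∈ R := LinearMap.mem_range_self _ _
      have heq : Finsupp.single ((n : ℤ) + 1) (1 : K)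
          - (-(((n : K)) + c) * a) • Finsupp.single 0 (1 : K)
          = gaussOp K c (Finsupp.single (n : ℤ) 1)
            - ((n : K) + c) • (Finsupp.single (n : ℤ) 1 - a • Finsupp.single 0 (1 : K)) := by
        rw [gaussOp_single]
        ext k
        simp only [Finsupp.sub_apply, Finsupp.add_apply, Finsupp.smul_apply,
          Finsupp.single_apply, smul_eq_mul, mul_ite, mul_zero, mul_one]
        split_ifs <;> first | (exfalso; omega) | (push_cast; ring1)
      rw [heq]
      exact Submodule.sub_mem _ hT (Submodule.smul_mem _ _ ha)
    | pred n ih =>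
      obtain ⟨a, ha⟩ := ih
      have hnz := hne (-(n : ℤ) - 1)
      have hnz' : (-1 - (n : K) + c) ≠ 0 := by
        push_cast at hnz
        intro hh
        apply hnz
        linear_combination hh
      refine ⟨-((((-(n:ℤ)-1 : ℤ) : K)) + c)⁻¹ * a, ?_⟩
      have hT : gaussOp K c (Finsupp.single (-(n : ℤ) - 1) 1) ∈ R := LinearMap.mem_range_self _ _
      have heq : Finsupp.single (-(n : ℤ) - 1) (1 : K)
          - (-((((-(n:ℤ)-1 : ℤ) : K)) + c)⁻¹ * a) • Finsupp.single 0 (1 : K)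
          = ((((-(n:ℤ)-1 : ℤ) : K)) + c)⁻¹ •
            (gaussOp K c (Finsupp.single (-(n : ℤ) - 1) 1)
              - (Finsupp.single (-(n : ℤ)) 1 - a • Finsupp.single 0 (1 : K))) := by
        rw [gaussOp_single]
        have h11 : (-(n : ℤ) - 1 + 1) = -(n : ℤ) := by ring
        rw [h11]
        ext k
        simp only [Finsupp.sub_apply, Finsupp.add_apply, Finsupp.smul_apply,
          Finsupp.single_apply, smul_eq_mul, mul_ite, mul_zero, mul_one]
        split_ifs <;>
          first
            | (exfalso; omega)
            | (push_cast; ring1)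
            | (push_cast; linear_combination -(mul_inv_cancel₀ hnz'))
      rw [heq]
      exact Submodule.smul_mem _ _ (Submodule.sub_mem _ hT ha)
  -- sup is top
  have htop : R ⊔ Submodule.span K {Finsupp.single (0:ℤ) (1:K)} = ⊤ := by
    rw [Submodule.eq_top_iff']
    intro f
    induction f using Finsupp.induction_linear with
    | zero => exact Submodule.zero_mem _
    | add f g hf hg => exact Submodule.add_mem _ hf hg
    | single n b =>
      obtain ⟨a, ha⟩ := key n
      have : Finsupp.single n b = b • (Finsupp.single n (1:K) - a • Finsupp.single 0 1)
          + (b * a) • Finsupp.single 0 (1:K) := by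
        rw [smul_sub, smul_smul, Finsupp.smul_single, smul_eq_mul, mul_one, sub_add_cancel]
      rw [this]
      exact Submodule.add_mem _
        (Submodule.mem_sup_left (Submodule.smul_mem _ _ ha))
        (Submodule.mem_sup_right (Submodule.smul_mem _ _ (Submodule.mem_span_singleton_self _)))
  -- finrank
  refine finrank_eq_one (Submodule.Quotient.mk (Finsupp.single (0:ℤ) (1:K))) ?_ ?_
  · rw [Ne, Submodule.Quotient.mk_eq_zero]
    exact he0
  · intro w
    obtain ⟨f, rfl⟩ := Submodule.Quotient.mk_surjective _ w
    have hf : f ∈ R ⊔ Submodule.span K {Finsupp.single (0:ℤ) (1:K)} := htop ▸ Submodule.mem_top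
    obtain ⟨r, hr, s, hs, rfl⟩ := Submodule.mem_sup.mp hf
    obtain ⟨a, rfl⟩ := Submodule.mem_span_singleton.mp hs
    refine ⟨a, ?_⟩
    rw [Submodule.Quotient.mk_add, (Submodule.Quotient.mk_eq_zero _).mpr hr, zero_add,
      Submodule.Quotient.mk_smul]
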